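/- arXiv:2203.09758 — 3 statements merged into one kernel-verified Lean document; each statement's English description precedes it below -/
import Mathlib

section
/- Let A ∈ L(⊗_{a∈𝒜} H_a) and B ∈ L(⊗_{b∈ℬ} H_b) be operators on tensor products of finite-dimensional Hilbert spaces indexed by finite sets 𝒜 and ℬ. Define the link product A * B := Tr_{𝒜∩ℬ}[ (1_{ℬ∖𝒜} ⊗ A^{T_{𝒜∩ℬ}})(B ⊗ 1_{𝒜∖ℬ}) ]. Then the link product is commutative: A * B = B * A, whenever A and B are Hermitian. -/
open Matrix Kronecker

/-- Partial transpose over the common factor `γ` of an operator on `H_α ⊗ H_γ`. -/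
def ptransposeA {α γ : Type*} (A : Matrix (α × γ) (α × γ) ℂ) : Matrix (α × γ) (α × γ) ℂ :=
  Matrix.of fun p q => A (p.1, q.2) (q.1, p.2)

/-- Partial transpose over the common factor `γ` of an operator on `H_γ ⊗ H_β`. -/
def ptransposeB {γ β : Type*} (B : Matrix (γ × β) (γ × β) ℂ) : Matrix (γ × β) (γ × β) ℂ :=
  Matrix.of fun p q => B (q.1, p.2) (p.1, q.2)

/-- Partial trace over the middle factor `γ` of an operator on `(H_α ⊗ H_γ) ⊗ H_β`. -/
noncomputable def ptraceMid {α γ β : Type*} [Fintype γ] (M : Matrix ((α × γ) × β) ((α × γ) × β) ℂ) :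
    Matrix (α × β) (α × β) ℂ :=
  Matrix.of fun x y => ∑ c : γ, M ((x.1, c), x.2) ((y.1, c), y.2)

/-- The link product `A * B = Tr_γ[(A^{T_γ} ⊗ 1_β)(1_α ⊗ B)]` of
`A` on `H_α ⊗ H_γ` and `B` on `H_γ ⊗ H_β` (common spaces `γ = 𝒜 ∩ ℬ`). -/
noncomputable def linkProduct {α γ β : Type*} [Fintype α] [Fintype γ] [Fintype β]
    [DecidableEq α] [DecidableEq β]
    (A : Matrix (α × γ) (α × γ) ℂ) (B : Matrix (γ × β) (γ × β) ℂ) :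
    Matrix (α × β) (α × β) ℂ :=
  ptraceMid ((ptransposeA A ⊗ₖ (1 : Matrix β β ℂ)) *
    (Matrix.reindex (Equiv.prodAssoc α γ β).symm (Equiv.prodAssoc α γ β).symm
      ((1 : Matrix α α ℂ) ⊗ₖ B)))

/-- The link product computed in the other order,
`B * A = Tr_γ[(1_α ⊗ B^{T_γ})(A ⊗ 1_β)]`. -/
noncomputable def linkProduct' {α γ β : Type*} [Fintype α] [Fintype γ] [Fintype β]
    [DecidableEq α] [DecidableEq β]
    (B : Matrix (γ × β) (γ × β) ℂ) (A : Matrix (α × γ) (α × γ) ℂ) :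
    Matrix (α × β) (α × β) ℂ :=
  ptraceMid ((Matrix.reindex (Equiv.prodAssoc α γ β).symm (Equiv.prodAssoc α γ β).symm
    ((1 : Matrix α α ℂ) ⊗ₖ ptransposeB B)) * (A ⊗ₖ (1 : Matrix β β ℂ)))

/-- Commutativity of the link product for Hermitian operators: `A * B = B * A`. -/
theorem stmt_7 {α γ β : Type*} [Fintype α] [Fintype γ] [Fintype β]
    [DecidableEq α] [DecidableEq β]
    (A : Matrix (α × γ) (α × γ) ℂ) (B : Matrix (γ × β) (γ × β) ℂ)
    (hA : A.IsHermitian) (hB : B.IsHermitian) :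
    linkProduct A B = linkProduct' B A := by
  ext ⟨x1, x2⟩ ⟨y1, y2⟩
  simp only [linkProduct, linkProduct', ptraceMid, ptransposeA, ptransposeB,
    Matrix.mul_apply, Matrix.reindex_apply, Matrix.submatrix_apply,
    Equiv.prodAssoc, Equiv.symm_symm, Equiv.coe_fn_mk, Matrix.kroneckerMap_apply,
    Matrix.of_apply, Matrix.one_apply, Fintype.sum_prod_type]
  simp only [mul_ite, ite_mul, mul_one, one_mul, mul_zero, zero_mul,
    Finset.sum_ite_eq, Finset.sum_ite_eq', Finset.mem_univ, if_true]
  simp [Finset.sum_ite_eq, Finset.sum_ite_eq', mul_comm]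
end

section
/- Let A and B be positive semidefinite operators on H_𝒜 = ⊗_{a∈𝒜}H_a and H_ℬ = ⊗_{b∈ℬ}H_b respectively. Then the link product A * B = Tr_{𝒜∩ℬ}[ (1_{ℬ∖𝒜} ⊗ A^{T_{𝒜∩ℬ}})(B ⊗ 1_{𝒜∖ℬ}) ] is positive semidefinite. -/
open Matrix Kronecker ComplexOrder

theorem linkProduct_apply {α γ β : Type*} [Fintype α] [Fintype γ] [Fintype β]
    [DecidableEq α] [DecidableEq β]
    (A : Matrix (α × γ) (α × γ) ℂ) (B : Matrix (γ × β) (γ × β) ℂ) (x y : α × β) :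
    linkProduct A B x y = ∑ c : γ, ∑ c' : γ, A (x.1, c') (y.1, c) * B (c', x.2) (c, y.2) := by
  simp [linkProduct, ptraceMid, ptransposeA, Matrix.mul_apply, Matrix.one_apply,
    Fintype.sum_prod_type, Finset.mul_sum, Finset.sum_mul, mul_ite, ite_mul, Equiv.prodAssoc]

theorem reorder_sum {γ K M : Type*} [Fintype γ] [Fintype K] [Fintype M] (f : γ → γ → K → M → ℂ) :
    ∑ km : K × M, ∑ c' : γ, ∑ c : γ, f c c' km.1 km.2
      = ∑ c : γ, ∑ c' : γ, ∑ k : K, ∑ m : M, f c c' k m :=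
  calc ∑ km : K × M, ∑ c' : γ, ∑ c : γ, f c c' km.1 km.2
      = ∑ p : (K × M) × (γ × γ), f p.2.2 p.2.1 p.1.1 p.1.2 := by
        simp [Fintype.sum_prod_type]
    _ = ∑ p : (γ × γ) × (K × M), f p.1.2 p.1.1 p.2.1 p.2.2 :=
        Fintype.sum_equiv (Equiv.prodComm _ _) _ _ (fun p => rfl)
    _ = ∑ c' : γ, ∑ c : γ, ∑ k : K, ∑ m : M, f c c' k m := by
        simp [Fintype.sum_prod_type]
    _ = ∑ c : γ, ∑ c' : γ, ∑ k : K, ∑ m : M, f c c' k m := Finset.sum_comm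

open scoped MatrixOrder Matrix.Norms.L2Operator in
theorem Matrix.posSemidef_iff_eq_transpose_mul_self {n : Type*} [Fintype n] [DecidableEq n]
    {A : Matrix n n ℂ} : A.PosSemidef ↔ ∃ B : Matrix n n ℂ, A = Bᴴ * B := by
  constructor
  · intro hA
    refine ⟨CFC.sqrt A, ?_⟩
    rw [← Matrix.star_eq_conjTranspose, (CFC.sqrt_nonneg A).isSelfAdjoint.star_eq,
      CFC.sqrt_mul_sqrt_self A hA.nonneg]
  · rintro ⟨B, rfl⟩
    exact Matrix.posSemidef_conjTranspose_mul_self B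

/-- The link product of positive semidefinite operators is positive semidefinite. -/
theorem stmt_8 {α γ β : Type*} [Fintype α] [Fintype γ] [Fintype β]
    [DecidableEq α] [DecidableEq β]
    (A : Matrix (α × γ) (α × γ) ℂ) (B : Matrix (γ × β) (γ × β) ℂ)
    (hA : A.PosSemidef) (hB : B.PosSemidef) :
    (linkProduct A B).PosSemidef := by
  classical
  obtain ⟨L, hL⟩ := Matrix.posSemidef_iff_eq_transpose_mul_self.mp hA
  obtain ⟨N, hN⟩ := Matrix.posSemidef_iff_eq_transpose_mul_self.mp hB
  set W : Matrix ((α × γ) × (γ × β)) (α × β) ℂ :=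
    Matrix.of fun km xb => ∑ c : γ, L km.1 (xb.1, c) * N km.2 (c, xb.2) with hW
  have key : linkProduct A B = Wᴴ * W := by
    ext x y
    rw [linkProduct_apply]
    have hrhs : (Wᴴ * W) x y = ∑ km : (α × γ) × (γ × β), ∑ c' : γ, ∑ c : γ,
        (star (L km.1 (x.1, c')) * L km.1 (y.1, c))
          * (star (N km.2 (c', x.2)) * N km.2 (c, y.2)) := by
      simp only [Matrix.mul_apply, Matrix.conjTranspose_apply, hW, Matrix.of_apply,
        star_sum, star_mul', Finset.sum_mul_sum]
      exact Finset.sum_congr rfl fun km _ => Finset.sum_congr rfl fun c' _ =>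
        Finset.sum_congr rfl fun c _ => by ring
    rw [hrhs, reorder_sum (fun c c' k m =>
      (star (L k (x.1, c')) * L k (y.1, c)) * (star (N m (c', x.2)) * N m (c, y.2)))]
    refine Finset.sum_congr rfl fun c _ => Finset.sum_congr rfl fun c' _ => ?_
    rw [hL, hN]
    simp only [Matrix.mul_apply, Matrix.conjTranspose_apply, Finset.sum_mul_sum]
  rw [key]
  exact Matrix.posSemidef_conjTranspose_mul_self W
end

section
/- For the amplitude damping channel composed with a z-rotation, with Kraus operators K₁ = (|0⟩⟨0| + √(1−p)|1⟩⟨1|)·exp(−iφt σ_z/2) and K₂ = √p |0⟩⟨1|·exp(−iφt σ_z/2), 0 < p ≤ 1, there exists a 2×2 Hermitian matrix h (explicitly h₁₁ = −t/2, h₂₂ = (2−p)t/2p, h₁₂ = h₂₁ = 0) such that β := i Σ_i K_i† (K̇_i − i Σ_j h_{ij} K_j) = 0. -/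
set_option maxHeartbeats 1000000

open Matrix

lemma expD (c : ℂ) (x : ℝ) :
    deriv (fun y : ℝ => Complex.exp (c * y)) x = c * Complex.exp (c * x) := by
  have h : HasDerivAt (fun y : ℝ => Complex.exp (c * y)) (c * Complex.exp (c * x)) x := by
    have h1 : HasDerivAt (fun z : ℂ => Complex.exp (c * z))
        (Complex.exp (c * x) * c) (x : ℂ) := by
      simpa [Function.comp_def] using (Complex.hasDerivAt_exp (c * x)).comp (x : ℂ)
        ((hasDerivAt_id (x : ℂ)).const_mul c)
    simpa [mul_comm] using h1.comp_ofReal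
  exact h.deriv

lemma expDn (t : ℝ) (φ : ℝ) :
    deriv (fun x : ℝ => Complex.exp (-(Complex.I * x * t) / 2)) φ
      = (-(Complex.I * t) / 2) * Complex.exp (-(Complex.I * φ * t) / 2) := by
  have e : (fun x : ℝ => Complex.exp (-(Complex.I * x * t) / 2))
      = fun x : ℝ => Complex.exp ((-(Complex.I * t) / 2) * x) := by
    funext x; ring_nf
  rw [e, expD]; ring_nf

lemma expDp (t : ℝ) (φ : ℝ) :
    deriv (fun x : ℝ => Complex.exp ((Complex.I * x * t) / 2)) φ
      = ((Complex.I * t) / 2) * Complex.exp ((Complex.I * φ * t) / 2) := by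
  have e : (fun x : ℝ => Complex.exp ((Complex.I * x * t) / 2))
      = fun x : ℝ => Complex.exp (((Complex.I * t) / 2) * x) := by
    funext x; ring_nf
  rw [e, expD]; ring_nf

/-- For the amplitude damping channel composed with a `z`-rotation, with Kraus operators
`K₁ = (|0⟩⟨0| + √(1−p)|1⟩⟨1|)·exp(−iφtσ_z/2)` and `K₂ = √p |0⟩⟨1|·exp(−iφtσ_z/2)`,
the Hermitian matrix `h = diag(−t/2, (2−p)t/(2p))` makes
`β = i Σᵢ Kᵢ† (K̇ᵢ − i Σⱼ h_{ij} Kⱼ)` vanish. -/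
theorem stmt_18 (p t φ : ℝ) (hp0 : 0 < p) (hp1 : p ≤ 1)
    (K : Fin 2 → ℝ → Matrix (Fin 2) (Fin 2) ℂ)
    (hK1 : ∀ x : ℝ, K 0 x =
      Matrix.of ![![1, 0], ![0, (Real.sqrt (1 - p) : ℂ)]] *
        Matrix.of ![![Complex.exp (-(Complex.I * (x : ℂ) * (t : ℂ)) / 2), 0],
          ![0, Complex.exp ((Complex.I * (x : ℂ) * (t : ℂ)) / 2)]])
    (hK2 : ∀ x : ℝ, K 1 x =
      Matrix.of ![![0, (Real.sqrt p : ℂ)], ![0, 0]] *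
        Matrix.of ![![Complex.exp (-(Complex.I * (x : ℂ) * (t : ℂ)) / 2), 0],
          ![0, Complex.exp ((Complex.I * (x : ℂ) * (t : ℂ)) / 2)]])
    (h : Matrix (Fin 2) (Fin 2) ℂ)
    (hh : h = Matrix.of ![![((-(t / 2) : ℝ) : ℂ), 0],
      ![0, (((2 - p) * t / (2 * p) : ℝ) : ℂ)]]) :
    h.IsHermitian ∧
    Complex.I • ∑ i : Fin 2, (K i φ)ᴴ *
      (Matrix.of (fun a b => deriv (fun x => K i x a b) φ) -
        Complex.I • ∑ j : Fin 2, h i j • K j φ) = 0 := by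
  constructor
  · rw [hh]
    ext i j
    fin_cases i <;> fin_cases j <;>
      simp [Matrix.conjTranspose_apply, Complex.conj_ofReal]
  · have hq : (Real.sqrt (1 - p) : ℂ) ^ 2 = 1 - p := by
      rw [← Complex.ofReal_pow, Real.sq_sqrt (by linarith)]; push_cast; ring
    have hq' : (Real.sqrt p : ℂ) ^ 2 = p := by
      rw [← Complex.ofReal_pow, Real.sq_sqrt hp0.le]
    have hp : (p : ℂ) ≠ 0 := by exact_mod_cast hp0.ne'
    ext a b
    fin_cases a <;> fin_cases b <;>
      simp only [Fin.sum_univ_two, hK1, hK2, hh, Matrix.smul_apply, Matrix.add_apply,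
        Matrix.sub_apply, Matrix.mul_apply, Matrix.of_apply, Matrix.conjTranspose_apply,
        Matrix.zero_apply, Fin.isValue, Matrix.cons_val', Matrix.cons_val_zero,
        Matrix.cons_val_one, Matrix.head_cons, Matrix.head_fin_const, Matrix.empty_val',
        Fin.mk_zero, Fin.mk_one, deriv_const_mul_field, deriv_const', Matrix.cons_val_fin_one, mul_zero, zero_mul, mul_one, one_mul, add_zero, zero_add,
        map_zero, _root_.map_one, Complex.conj_ofReal, expDn, expDp, smul_eq_mul]
    all_goals
      simp only [star_mul', star_zero, RCLike.star_def, ← Complex.exp_conj, map_div₀,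
        _root_.map_mul, map_neg, Complex.conj_I, Complex.conj_ofReal, neg_div, neg_mul,
        Complex.exp_neg, Complex.ofReal_neg, Complex.ofReal_div, Complex.ofReal_mul,
        Complex.ofReal_sub, Complex.ofReal_ofNat]
      try field_simp [Complex.exp_ne_zero]
      try ring_nf
      try simp only [hq, hq']
      try ring_nf
end
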